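/- Let P be a grid poset. Suppose P decomposes as P = P₁ ◁ Q, and Q (with the restricted chain function) decomposes as Q = P₂ ◁ P₃. Then P₁ ∪ P₂ is an order ideal of P, P decomposes as P = (P₁ ∪ P₂) ◁ P₃, and P₁ ∪ P₂ (with the restricted chain function) decomposes as P₁ ◁ P₂. -/

import Mathlib

open scoped Classical

structure GridData (P : Type) [PartialOrder P] where
  m : ℕ
  chain : P → ℕ
  color : P → Fin 2

def IsIdeal {P : Type} [PartialOrder P] (t : Finset P) : Prop :=
  ∀ ⦃x⦄, x ∈ t → ∀ ⦃y⦄, y ≤ x → y ∈ t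

namespace GridData

variable {P : Type} [PartialOrder P] [Fintype P]

/-- The defining properties of a grid poset. -/
def IsGridPoset (G : GridData P) : Prop :=
  1 ≤ G.m ∧
  (∀ u : P, G.chain u ∈ Finset.Icc 1 G.m) ∧
  (∀ i ∈ Finset.Icc 1 G.m, ∃ u : P, G.chain u = i) ∧
  (∀ u v : P, G.chain u = G.chain v → u ≤ v ∨ v ≤ u) ∧
  (∀ u v : P, u ⋖ v → G.chain u = G.chain v ∨ G.chain u = G.chain v + 1)

/-- The defining properties of a two-color grid poset. -/
def IsTwoColorGridPoset (G : GridData P) : Prop :=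
  G.IsGridPoset ∧
  (∀ u v : P, G.chain u = G.chain v → G.color u = G.color v) ∧
  (∀ u v : P, Relation.ReflTransGen (fun x y : P => x ⋖ y ∨ y ⋖ x) u v →
    G.chain u = G.chain v + 1 → G.color u ≠ G.color v)

/-- The max property. -/
def MaxProperty (G : GridData P) : Prop :=
  (∀ u : P, IsMax u → G.chain u ≤ 2) ∧
  (∀ u v : P, IsMax u → IsMax v → u ≠ v → G.color u ≠ G.color v)

/-- The fiber `C i` of the chain function. -/
def fiber (G : GridData P) (i : ℕ) : Finset P :=
  Finset.univ.filter (fun u => G.chain u = i)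

/-- One step in a `γ`-component of `J_color(P)`: add or remove a single vertex of
color `γ` while both sets are order ideals. -/
def GStep (G : GridData P) (γ : Fin 2) (s t : Finset P) : Prop :=
  IsIdeal s ∧ IsIdeal t ∧ ∃ u : P, G.color u = γ ∧
    ((u ∉ s ∧ t = insert u s) ∨ (u ∉ t ∧ s = insert u t))

/-- The `γ`-component of `t` in `J_color(P)`. -/
def comp (G : GridData P) (γ : Fin 2) (t : Finset P) : Set (Finset P) :=
  {s | Relation.ReflTransGen (G.GStep γ) t s}

noncomputable def minCard (G : GridData P) (γ : Fin 2) (t : Finset P) : ℕ :=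
  sInf (Finset.card '' G.comp γ t)

noncomputable def maxCard (G : GridData P) (γ : Fin 2) (t : Finset P) : ℕ :=
  sSup (Finset.card '' G.comp γ t)

/-- `m_γ(t) = 2 ρ_γ(t) - l_γ(t)`. -/
noncomputable def mcoord (G : GridData P) (γ : Fin 2) (t : Finset P) : ℤ :=
  2 * ((t.card : ℤ) - (G.minCard γ t : ℤ)) - ((G.maxCard γ t : ℤ) - (G.minCard γ t : ℤ))

/-- The weight of an element of `J_color(P)` (color `0` is α, color `1` is β). -/
noncomputable def wt (G : GridData P) (t : Finset P) : Fin 2 → ℤ :=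
  ![G.mcoord 0 t, G.mcoord 1 t]

/-- `J_color(P)` is `M`-structured. -/
def MStructured (G : GridData P) (M : Matrix (Fin 2) (Fin 2) ℤ) : Prop :=
  ∀ s t : Finset P, IsIdeal s → IsIdeal t → ∀ u : P, u ∉ s → t = insert u s →
    G.wt s + M (G.color u) = G.wt t

end GridData

namespace GridData

variable {P : Type} [PartialOrder P] [Fintype P]

/-- The grid-poset conditions without surjectivity of the chain function. -/
def IsGridPosetNS (G : GridData P) : Prop :=
  1 ≤ G.m ∧
  (∀ u : P, G.chain u ∈ Finset.Icc 1 G.m) ∧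
  (∀ u v : P, G.chain u = G.chain v → u ≤ v ∨ v ≤ u) ∧
  (∀ u v : P, u ⋖ v → G.chain u = G.chain v ∨ G.chain u = G.chain v + 1)

/-- `S` (a subposet of `P` with the restricted chain function) decomposes as
`A ◁ (S \ A)`: `A` is a nonempty proper order ideal of `S`, and the chain index of any
maximal (resp. minimal) element of `A` is at most that of any maximal (resp. minimal)
element of `S \ A`. -/
def DecompOf (G : GridData P) (S A : Finset P) : Prop :=
  A ⊆ S ∧ A.Nonempty ∧ A ≠ S ∧
  (∀ x ∈ A, ∀ y ∈ S, y ≤ x → y ∈ A) ∧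
  (∀ u ∈ A, (∀ w ∈ A, u ≤ w → w = u) →
    ∀ v ∈ S \ A, (∀ w ∈ S \ A, v ≤ w → w = v) → G.chain u ≤ G.chain v) ∧
  (∀ u ∈ A, (∀ w ∈ A, w ≤ u → w = u) →
    ∀ v ∈ S \ A, (∀ w ∈ S \ A, w ≤ v → w = v) → G.chain u ≤ G.chain v)

end GridData


private lemma chain_anti_aux {P : Type} [PartialOrder P] [Fintype P] (G : GridData P)
    (hcov : ∀ u v : P, u ⋖ v → G.chain u = G.chain v ∨ G.chain u = G.chain v + 1)
    {v w : P} (h : v ≤ w) : G.chain w ≤ G.chain v := by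
  classical
  letI : LocallyFiniteOrder P := Fintype.toLocallyFiniteOrder
  rcases h.lt_or_eq with hlt | rfl
  · have ht := transGen_covBy_of_lt hlt
    have ht' : Relation.TransGen (fun a b : P => G.chain b ≤ G.chain a) v w :=
      Relation.TransGen.mono (fun a b h => by rcases hcov _ _ h with h' | h' <;> omega) v w ht
    rw [@Relation.transGen_eq_self P _ ⟨
      (fun (a b c : P) (hab : G.chain b ≤ G.chain a) (hbc : G.chain c ≤ G.chain b) =>
        le_trans hbc hab)⟩] at ht'
    exact ht'
  · exact le_refl _

/-- If `P = P₁ ◁ Q` and `Q = P₂ ◁ P₃`, then `P₁ ∪ P₂` is an order ideal of `P`,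
`P = (P₁ ∪ P₂) ◁ P₃`, and `P₁ ∪ P₂ = P₁ ◁ P₂`. -/
theorem stmt_13 {P : Type} [PartialOrder P] [Fintype P] (G : GridData P)
    (hG : G.IsGridPosetNS) (P₁ P₂ : Finset P)
    (h₁ : G.DecompOf Finset.univ P₁)
    (h₂ : G.DecompOf (Finset.univ \ P₁) P₂) :
    IsIdeal (P₁ ∪ P₂) ∧ G.DecompOf Finset.univ (P₁ ∪ P₂) ∧
      G.DecompOf (P₁ ∪ P₂) P₁ := by
  classical
  obtain ⟨h1sub, h1ne, h1neq, h1id, h1max, h1min⟩ := h₁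
  obtain ⟨h2sub, h2ne, h2neq, h2id, h2max, h2min⟩ := h₂
  have hQ : ∀ x : P, x ∈ Finset.univ \ P₁ ↔ x ∉ P₁ := by
    intro x; simp [Finset.mem_sdiff]
  have hP2Q : ∀ x ∈ P₂, x ∉ P₁ := fun x hx => (hQ x).mp (h2sub hx)
  have hcov := hG.2.2.2
  -- the union is an ideal
  have hIdeal : IsIdeal (P₁ ∪ P₂) := by
    intro x hx y hy
    rcases Finset.mem_union.mp hx with hx1 | hx2
    · exact Finset.mem_union_left _ (h1id x hx1 y (Finset.mem_univ y) hy)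
    · by_cases hy1 : y ∈ P₁
      · exact Finset.mem_union_left _ hy1
      · exact Finset.mem_union_right _ (h2id x hx2 y ((hQ y).mpr hy1) hy)
  -- set equality : univ \ (P₁ ∪ P₂) = (univ \ P₁) \ P₂
  have hset : ∀ x : P, x ∈ Finset.univ \ (P₁ ∪ P₂) ↔ x ∈ (Finset.univ \ P₁) \ P₂ := by
    intro x; simp only [Finset.mem_sdiff, Finset.mem_union, Finset.mem_univ, true_and]; tauto
  refine ⟨hIdeal, ?_, ?_⟩
  · -- P = (P₁ ∪ P₂) ◁ P₃
    refine ⟨Finset.subset_univ _, h1ne.mono Finset.subset_union_left, ?_, ?_, ?_, ?_⟩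
    · -- proper
      intro hcontra
      obtain ⟨q, hq⟩ := Finset.exists_of_ssubset (h2sub.ssubset_of_ne h2neq)
      have : q ∈ P₁ ∪ P₂ := hcontra ▸ Finset.mem_univ q
      rcases Finset.mem_union.mp this with h | h
      · exact (hQ q).mp hq.1 h
      · exact hq.2 h
    · intro x hx y _ hy; exact hIdeal hx hy
    · -- max condition
      intro u hu humax v hv hvmax
      rw [hset] at hv
      have hv' := hv
      rw [Finset.mem_sdiff] at hv'
      rcases Finset.mem_union.mp hu with hu1 | hu2
      · -- u ∈ P₁, maximal in P₁
        have humax1 : ∀ w ∈ P₁, u ≤ w → w = u := fun w hw =>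
          humax w (Finset.mem_union_left _ hw)
        obtain ⟨w, hvw, hwQ, hwmax⟩ := Finset.exists_le_maximal _ hv'.1
        have hwmax' : ∀ x ∈ Finset.univ \ P₁, w ≤ x → x = w := fun x hx hwx =>
          le_antisymm (hwmax hx hwx) hwx
        by_cases hw2 : w ∈ P₂
        · -- w maximal in P₂ as well
          have hwmaxP2 : ∀ x ∈ P₂, w ≤ x → x = w := fun x hx hwx =>
            hwmax' x (h2sub hx) hwx
          have hvmax' : ∀ x ∈ (Finset.univ \ P₁) \ P₂, v ≤ x → x = v := fun x hx hvx =>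
            hvmax x ((hset x).mpr hx) hvx
          exact le_trans (h1max u hu1 humax1 w hwQ hwmax')
            (h2max w hw2 hwmaxP2 v hv hvmax')
        · -- w ∈ P₃, so v = w is maximal in Q
          have hw3 : w ∈ (Finset.univ \ P₁) \ P₂ := Finset.mem_sdiff.mpr ⟨hwQ, hw2⟩
          have : w = v := hvmax w ((hset w).mpr hw3) hvw
          subst this
          exact h1max u hu1 humax1 w hwQ hwmax'
      · -- u ∈ P₂, maximal in P₂
        have humaxP2 : ∀ x ∈ P₂, u ≤ x → x = u := fun x hx =>
          humax x (Finset.mem_union_right _ hx)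
        have hvmax' : ∀ x ∈ (Finset.univ \ P₁) \ P₂, v ≤ x → x = v := fun x hx hvx =>
          hvmax x ((hset x).mpr hx) hvx
        exact h2max u hu2 humaxP2 v hv hvmax'
    · -- min condition
      intro u hu humin v hv hvmin
      rw [hset] at hv
      have hv' := hv
      rw [Finset.mem_sdiff] at hv'
      rcases Finset.mem_union.mp hu with hu1 | hu2
      · have humin1 : ∀ w ∈ P₁, w ≤ u → w = u := fun w hw =>
          humin w (Finset.mem_union_left _ hw)
        obtain ⟨w, hwv, hwQ, hwmin⟩ := Finset.exists_le_minimal _ hv'.1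
        have hwmin' : ∀ x ∈ Finset.univ \ P₁, x ≤ w → x = w := fun x hx hxw =>
          le_antisymm hxw (hwmin hx hxw)
        by_cases hw2 : w ∈ P₂
        · have hwminP2 : ∀ x ∈ P₂, x ≤ w → x = w := fun x hx hxw =>
            hwmin' x (h2sub hx) hxw
          have hvmin' : ∀ x ∈ (Finset.univ \ P₁) \ P₂, x ≤ v → x = v := fun x hx hxv =>
            hvmin x ((hset x).mpr hx) hxv
          exact le_trans (h1min u hu1 humin1 w hwQ hwmin')
            (h2min w hw2 hwminP2 v hv hvmin')
        · have hw3 : w ∈ (Finset.univ \ P₁) \ P₂ := Finset.mem_sdiff.mpr ⟨hwQ, hw2⟩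
          have : w = v := hvmin w ((hset w).mpr hw3) hwv
          subst this
          exact h1min u hu1 humin1 w hwQ hwmin'
      · have huminP2 : ∀ x ∈ P₂, x ≤ u → x = u := fun x hx =>
          humin x (Finset.mem_union_right _ hx)
        have hvmin' : ∀ x ∈ (Finset.univ \ P₁) \ P₂, x ≤ v → x = v := fun x hx hxv =>
          hvmin x ((hset x).mpr hx) hxv
        exact h2min u hu2 huminP2 v hv hvmin'
  · -- P₁ ∪ P₂ = P₁ ◁ P₂
    have hdiff : ∀ x : P, x ∈ (P₁ ∪ P₂) \ P₁ ↔ x ∈ P₂ := by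
      intro x
      simp only [Finset.mem_sdiff, Finset.mem_union]
      constructor
      · rintro ⟨h | h, h'⟩
        · exact absurd h h'
        · exact h
      · intro h; exact ⟨Or.inr h, hP2Q x h⟩
    refine ⟨Finset.subset_union_left, h1ne, ?_, ?_, ?_, ?_⟩
    · intro hcontra
      obtain ⟨q, hq⟩ := h2ne
      have : q ∈ P₁ := by rw [hcontra]; exact Finset.mem_union_right _ hq
      exact hP2Q q hq this
    · intro x hx y _ hy
      exact h1id x hx y (Finset.mem_univ y) hy
    · -- max condition
      intro u hu humax v hv hvmax
      rw [hdiff] at hv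
      have hvmaxP2 : ∀ x ∈ P₂, v ≤ x → x = v := fun x hx hvx =>
        hvmax x ((hdiff x).mpr hx) hvx
      obtain ⟨w, hvw, hwQ, hwmax⟩ := Finset.exists_le_maximal _ (h2sub hv)
      have hwmax' : ∀ x ∈ Finset.univ \ P₁, w ≤ x → x = w := fun x hx hwx =>
        le_antisymm (hwmax hx hwx) hwx
      have hchain_wv : G.chain w ≤ G.chain v := chain_anti_aux G hcov hvw
      exact le_trans (h1max u hu humax w hwQ hwmax') hchain_wv
    · -- min condition
      intro u hu humin v hv hvmin
      rw [hdiff] at hv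
      obtain ⟨w, hwv, hwQ, hwmin⟩ := Finset.exists_le_minimal _ (h2sub hv)
      have hwmin' : ∀ x ∈ Finset.univ \ P₁, x ≤ w → x = w := fun x hx hxw =>
        le_antisymm hxw (hwmin hx hxw)
      have hw2 : w ∈ P₂ := h2id v hv w hwQ hwv
      have : w = v := hvmin w ((hdiff w).mpr hw2) hwv
      subst this
      exact h1min u hu humin w hwQ hwmin'
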